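/- Let f_e(k) = P(Binomial(2k+1, p_e) ≥ k+1) for p_e ∈ (0, 1/2). Then the successive improvements diminish: for integers k₁ > k₂ ≥ 0, |f_e(k₁+1) - f_e(k₁)| ≤ |f_e(k₂+1) - f_e(k₂)|. -/

import Mathlib

noncomputable def fe (p : ℝ) (k : ℕ) : ℝ :=
  ∑ i ∈ Finset.Icc (k+1) (2*k+1),
    (Nat.choose (2*k+1) i : ℝ) * p ^ i * (1 - p) ^ (2*k+1-i)

private lemma sum_shift (a b c : ℕ) (g : ℕ → ℝ) :
    ∑ m ∈ Finset.Icc (a+c) (b+c), g m = ∑ j ∈ Finset.Icc a b, g (j+c) := by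
  rw [← Finset.map_add_right_Icc, Finset.sum_map]; rfl

private lemma sum_Icc_succ_bot {a b : ℕ} (h : a ≤ b) (f : ℕ → ℝ) :
    ∑ j ∈ Finset.Icc a b, f j = f a + ∑ j ∈ Finset.Icc (a+1) b, f j := by
  rw [Finset.Icc_add_one_left_eq_Ioc, Finset.Icc_eq_cons_Ioc h, Finset.sum_cons]

private lemma pascal2 (n j : ℕ) :
    Nat.choose (n+2) (j+2) = Nat.choose n j + 2*Nat.choose n (j+1) + Nat.choose n (j+2) := by
  have a1 : Nat.choose (n+2) (j+2) = Nat.choose (n+1) (j+1) + Nat.choose (n+1) (j+2) :=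
    Nat.choose_succ_succ' (n+1) (j+1)
  have a2 : Nat.choose (n+1) (j+1) = Nat.choose n j + Nat.choose n (j+1) :=
    Nat.choose_succ_succ' n j
  have a3 : Nat.choose (n+1) (j+2) = Nat.choose n (j+1) + Nat.choose n (j+2) :=
    Nat.choose_succ_succ' n (j+1)
  omega

private lemma fe_succ_sub (p : ℝ) (k : ℕ) :
    fe p (k+1) - fe p k
      = (Nat.choose (2*k+1) (k+1) : ℝ) * (p*(1-p))^(k+1) * (2*p-1) := by
  set q := 1 - p with hq
  have key : fe p (k+1)
      = (∑ j ∈ Finset.Icc k (2*k+1), (Nat.choose (2*k+1) j : ℝ) * p^(j+2) * q^(2*k+1-j))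
      + (∑ j ∈ Finset.Icc k (2*k+1), 2*(Nat.choose (2*k+1) (j+1) : ℝ) * p^(j+2) * q^(2*k+1-j))
      + (∑ j ∈ Finset.Icc k (2*k+1), (Nat.choose (2*k+1) (j+2) : ℝ) * p^(j+2) * q^(2*k+1-j)) := by
    rw [fe]
    have e1 : Finset.Icc (k+1+1) (2*(k+1)+1) = Finset.Icc (k+2) (2*k+1+2) := by
      congr 1 <;> omega
    rw [e1, sum_shift k (2*k+1) 2]
    rw [← Finset.sum_add_distrib, ← Finset.sum_add_distrib]
    apply Finset.sum_congr rfl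
    intro j hj
    simp only [Finset.mem_Icc] at hj
    have hpas : Nat.choose (2*(k+1)+1) (j+2)
        = Nat.choose (2*k+1) j + 2*Nat.choose (2*k+1) (j+1) + Nat.choose (2*k+1) (j+2) := by
      rw [show 2*(k+1)+1 = (2*k+1)+2 by omega]
      exact pascal2 (2*k+1) j
    have hexp : 2*(k+1)+1 - (j+2) = 2*k+1-j := by omega
    rw [hpas, hexp]
    push_cast
    ring
  set n := 2*k+1 with hn
  have hS0 : (∑ j ∈ Finset.Icc k n, (Nat.choose n j : ℝ) * p^(j+2) * q^(n-j))
      = p^2 * ((Nat.choose n k : ℝ) * p^k * q^(k+1)) + p^2 * fe p k := by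
    rw [sum_Icc_succ_bot (by omega), fe, Finset.mul_sum]
    have hnk : n - k = k+1 := by omega
    rw [hnk]
    congr 1
    · ring
    · apply Finset.sum_congr rfl
      intro j hj
      ring
  have hS1 : (∑ j ∈ Finset.Icc k n, 2*(Nat.choose n (j+1) : ℝ) * p^(j+2) * q^(n-j))
      = 2*p*q * fe p k := by
    have e : (∑ j ∈ Finset.Icc k n, 2*(Nat.choose n (j+1) : ℝ) * p^(j+2) * q^(n-j))
        = ∑ m ∈ Finset.Icc (k+1) (n+1), 2*(Nat.choose n m : ℝ) * p^(m+1) * q^(n+1-m) := by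
      rw [sum_shift k n 1]
      apply Finset.sum_congr rfl
      intro j hj
      simp only [Finset.mem_Icc] at hj
      have : n+1-(j+1) = n-j := by omega
      rw [this]
    rw [e, Finset.sum_Icc_succ_top (by omega)]
    have hz : (Nat.choose n (n+1) : ℝ) = 0 := by
      rw [Nat.choose_eq_zero_of_lt (by omega)]; norm_num
    rw [hz, fe, Finset.mul_sum]
    simp only [mul_zero, zero_mul, add_zero]
    apply Finset.sum_congr rfl
    intro m hm
    simp only [Finset.mem_Icc] at hm
    have h1 : n+1-m = (n-m)+1 := by omega
    rw [h1, pow_succ, pow_succ]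
    ring
  have hS2 : (∑ j ∈ Finset.Icc k n, (Nat.choose n (j+2) : ℝ) * p^(j+2) * q^(n-j))
      = q^2 * fe p k - q^2 * ((Nat.choose n (k+1) : ℝ) * p^(k+1) * q^k) := by
    have e : (∑ j ∈ Finset.Icc k n, (Nat.choose n (j+2) : ℝ) * p^(j+2) * q^(n-j))
        = ∑ m ∈ Finset.Icc (k+2) (n+1+1), (Nat.choose n m : ℝ) * p^m * q^(n+1+1-m) := by
      rw [show n+1+1 = n+2 by omega, sum_shift k n 2]
      apply Finset.sum_congr rfl
      intro j hj
      simp only [Finset.mem_Icc] at hj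
      have : n+2-(j+2) = n-j := by omega
      rw [this]
    rw [e, Finset.sum_Icc_succ_top (by omega), Finset.sum_Icc_succ_top (by omega)]
    have hz1 : (Nat.choose n (n+1) : ℝ) = 0 := by
      rw [Nat.choose_eq_zero_of_lt (by omega)]; norm_num
    have hz2 : (Nat.choose n (n+1+1) : ℝ) = 0 := by
      rw [Nat.choose_eq_zero_of_lt (by omega)]; norm_num
    rw [hz1, hz2]
    simp only [zero_mul, add_zero]
    have efe : fe p k = ((Nat.choose n (k+1) : ℝ) * p^(k+1) * q^k)
        + ∑ m ∈ Finset.Icc (k+2) n, (Nat.choose n m : ℝ) * p^m * q^(n-m) := by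
      rw [fe, sum_Icc_succ_bot (by omega), show n - (k+1) = k by omega]
    have esum : ∑ m ∈ Finset.Icc (k+2) n, (Nat.choose n m : ℝ) * p^m * q^(n+1+1-m)
        = ∑ m ∈ Finset.Icc (k+2) n, q^2 * ((Nat.choose n m : ℝ) * p^m * q^(n-m)) := by
      apply Finset.sum_congr rfl
      intro m hm
      simp only [Finset.mem_Icc] at hm
      have h1 : n+1+1-m = (n-m)+2 := by omega
      rw [h1, pow_add]
      ring
    rw [esum, efe, mul_add, Finset.mul_sum]
    ring
  rw [key, hS0, hS1, hS2]
  have hsym : (Nat.choose n k : ℝ) = (Nat.choose n (k+1) : ℝ) := by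
    norm_cast
    rw [← Nat.choose_symm (show k+1 ≤ n by omega), show n - (k+1) = k by omega]
  rw [hsym, hq, mul_pow]
  ring

private lemma choose_ineq (k : ℕ) :
    Nat.choose (2*k+3) (k+2) ≤ 4 * Nat.choose (2*k+1) (k+1) := by
  have h1 : (2*k+2+1) * Nat.choose (2*k+2) (k+1)
      = Nat.choose (2*k+2+1) (k+1+1) * (k+1+1) := by
    have := Nat.add_one_mul_choose_eq (2*k+2) (k+1)
    simpa [Nat.succ_eq_add_one] using this
  have h2 : (2*k+1+1) * Nat.choose (2*k+1) k
      = Nat.choose (2*k+1+1) (k+1) * (k+1) := by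
    have := Nat.add_one_mul_choose_eq (2*k+1) k
    simpa [Nat.succ_eq_add_one] using this
  have h3 : Nat.choose (2*k+1) k = Nat.choose (2*k+1) (k+1) := by
    rw [← Nat.choose_symm (show k+1 ≤ 2*k+1 by omega), show 2*k+1 - (k+1) = k by omega]
  rw [show 2*k+3 = 2*k+2+1 by omega, show k+2 = k+1+1 by omega]
  have key : Nat.choose (2*k+2+1) (k+1+1) * ((k+1+1) * (k+1))
      = (2*k+2+1) * ((2*k+1+1) * Nat.choose (2*k+1) (k+1)) := by
    calc Nat.choose (2*k+2+1) (k+1+1) * ((k+1+1) * (k+1))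
        = (Nat.choose (2*k+2+1) (k+1+1) * (k+1+1)) * (k+1) := by ring
      _ = ((2*k+2+1) * Nat.choose (2*k+2) (k+1)) * (k+1) := by rw [← h1]
      _ = (2*k+2+1) * (Nat.choose (2*k+2) (k+1) * (k+1)) := by ring
      _ = (2*k+2+1) * (Nat.choose (2*k+1+1) (k+1) * (k+1)) := by congr 1 <;> omega
      _ = (2*k+2+1) * ((2*k+1+1) * Nat.choose (2*k+1) k) := by rw [← h2]
      _ = (2*k+2+1) * ((2*k+1+1) * Nat.choose (2*k+1) (k+1)) := by rw [h3]
  have h5 : Nat.choose (2*k+2+1) (k+1+1) * ((k+1+1) * (k+1))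
      ≤ (4 * Nat.choose (2*k+1) (k+1)) * ((k+1+1) * (k+1)) := by
    rw [key]
    nlinarith [Nat.zero_le (Nat.choose (2*k+1) (k+1))]
  exact Nat.le_of_mul_le_mul_right h5 (by positivity)

/-- Diminishing returns: the improvement from adding two workers decreases. -/
theorem fe_diminishing_returns (p : ℝ) (hp0 : 0 < p) (hp : p < 1/2)
    (k₁ k₂ : ℕ) (h : k₂ < k₁) :
    |fe p (k₁+1) - fe p k₁| ≤ |fe p (k₂+1) - fe p k₂| := by
  have hq0 : 0 < 1 - p := by linarith
  have hx0 : 0 < p * (1 - p) := mul_pos hp0 hq0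
  have hx4 : p * (1 - p) ≤ 1/4 := by nlinarith
  have h12 : (0:ℝ) ≤ 1 - 2*p := by linarith
  set D : ℕ → ℝ := fun k => (Nat.choose (2*k+1) (k+1) : ℝ) * (p*(1-p))^(k+1) * (1-2*p)
    with hD
  have habs : ∀ k, |fe p (k+1) - fe p k| = D k := by
    intro k
    rw [fe_succ_sub, hD]
    have h1 : (Nat.choose (2*k+1) (k+1) : ℝ) * (p*(1-p))^(k+1) * (2*p-1)
        = -((Nat.choose (2*k+1) (k+1) : ℝ) * (p*(1-p))^(k+1) * (1-2*p)) := by ring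
    rw [h1, abs_neg, abs_of_nonneg]
    exact mul_nonneg (mul_nonneg (Nat.cast_nonneg _) (le_of_lt (pow_pos hx0 _))) h12
  have hstep : ∀ k, D (k+1) ≤ D k := by
    intro k
    simp only [hD]
    have hc : (Nat.choose (2*(k+1)+1) (k+1+1) : ℝ) ≤ 4 * (Nat.choose (2*k+1) (k+1) : ℝ) := by
      have := choose_ineq k
      rw [show 2*(k+1)+1 = 2*k+3 by omega]
      exact_mod_cast this
    have hxp : (0:ℝ) ≤ (p*(1-p))^(k+1) := le_of_lt (pow_pos hx0 _)
    have key : (Nat.choose (2*(k+1)+1) (k+1+1) : ℝ) * (p*(1-p))^(k+1+1)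
        ≤ (Nat.choose (2*k+1) (k+1) : ℝ) * (p*(1-p))^(k+1) := by
      have e1 : (p*(1-p))^(k+1+1) = (p*(1-p))^(k+1) * (p*(1-p)) := by rw [pow_succ]
      rw [e1]
      calc (Nat.choose (2*(k+1)+1) (k+1+1) : ℝ) * ((p*(1-p))^(k+1) * (p*(1-p)))
          ≤ (4 * (Nat.choose (2*k+1) (k+1) : ℝ)) * ((p*(1-p))^(k+1) * (1/4)) := by
            apply mul_le_mul hc
            · exact mul_le_mul_of_nonneg_left hx4 hxp
            · positivity
            · positivity
        _ = (Nat.choose (2*k+1) (k+1) : ℝ) * (p*(1-p))^(k+1) := by ring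
    exact mul_le_mul_of_nonneg_right key h12
  have hanti : Antitone D := antitone_nat_of_succ_le hstep
  rw [habs, habs]
  exact hanti h.le
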